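/- Let P = [1,m] × [1,n] ⊂ ℤ² with m, n > 1, and let π be an up-right path from (1,1) to (m,n) with vertices (u_i, v_i), i = 1,…,m+n−1. Then the number of antichains of P that intersect π exactly once equals Σ_{i=1}^{m+n−1} C(n+u_i−v_i−1, u_i−1)·C(m−u_i+v_i−1, v_i−1). -/

import Mathlib

open Finset

attribute [local instance] Classical.propDecidable

lemma ac_fst_inj {A : Finset (ℕ × ℕ)} (hA : IsAntichain (· ≤ ·) (↑A : Set (ℕ × ℕ)))
    {q r : ℕ × ℕ} (hq : q ∈ A) (hr : r ∈ A) (h : q.1 = r.1) : q = r := by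
  by_contra hne
  rcases le_total q.2 r.2 with h2 | h2
  · exact hA hq hr hne ⟨h.le, h2⟩
  · exact hA hr hq (Ne.symm hne) ⟨h.ge, h2⟩

lemma ac_snd_inj {A : Finset (ℕ × ℕ)} (hA : IsAntichain (· ≤ ·) (↑A : Set (ℕ × ℕ)))
    {q r : ℕ × ℕ} (hq : q ∈ A) (hr : r ∈ A) (h : q.2 = r.2) : q = r := by
  by_contra hne
  rcases le_total q.1 r.1 with h2 | h2
  · exact hA hq hr hne ⟨h2, h.le⟩
  · exact hA hr hq (Ne.symm hne) ⟨h2, h.ge⟩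

lemma ac_filter_eq {A : Finset (ℕ × ℕ)} (hA : IsAntichain (· ≤ ·) (↑A : Set (ℕ × ℕ)))
    {x y : ℕ} (hxy : (x, y) ∈ A) :
    A.filter (fun q => q.1 ≤ x) = A.filter (fun q => y ≤ q.2) := by
  ext ⟨a, b⟩
  simp only [mem_filter]
  constructor
  · rintro ⟨hab, hax⟩
    refine ⟨hab, ?_⟩
    rcases eq_or_lt_of_le hax with h | h
    · cases ac_fst_inj hA hab hxy h; exact le_rfl
    · by_contra hby
      exact hA hab hxy (by rintro h; cases h; exact lt_irrefl _ h) ⟨h.le, by omega⟩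
  · rintro ⟨hab, hby⟩
    refine ⟨hab, ?_⟩
    rcases eq_or_lt_of_le hby with h | h
    · cases ac_snd_inj hA hab hxy h.symm; exact le_rfl
    · by_contra hax
      exact hA hxy hab (by rintro h; cases h; exact lt_irrefl _ h) ⟨by omega, h.le⟩

lemma card_image_fst {A : Finset (ℕ × ℕ)} (hA : IsAntichain (· ≤ ·) (↑A : Set (ℕ × ℕ))) :
    (A.image Prod.fst).card = A.card :=
  Finset.card_image_of_injOn (fun q hq r hr h => ac_fst_inj hA hq hr h)

lemma card_image_snd {A : Finset (ℕ × ℕ)} (hA : IsAntichain (· ≤ ·) (↑A : Set (ℕ × ℕ))) :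
    (A.image Prod.snd).card = A.card :=
  Finset.card_image_of_injOn (fun q hq r hr h => ac_snd_inj hA hq hr h)

lemma rank_injY {Y : Finset ℕ} {y₁ y₂ : ℕ} (h1 : y₁ ∈ Y) (h2 : y₂ ∈ Y)
    (h : (Y.filter (y₁ ≤ ·)).card = (Y.filter (y₂ ≤ ·)).card) : y₁ = y₂ := by
  have key : ∀ a b : ℕ, a ∈ Y → a < b →
      (Y.filter (b ≤ ·)).card < (Y.filter (a ≤ ·)).card := by
    intro a b ha hab
    apply Finset.card_lt_card
    constructor
    · exact Finset.monotone_filter_right Y (fun z _ hz => le_trans hab.le hz)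
    · intro hsub
      have := hsub (Finset.mem_filter.2 ⟨ha, le_rfl⟩)
      simp only [Finset.mem_filter] at this
      omega
  rcases lt_trichotomy y₁ y₂ with hlt | heq | hgt
  · exact absurd h (by have := key y₁ y₂ h1 hlt; omega)
  · exact heq
  · exact absurd h (by have := key y₂ y₁ h2 hgt; omega)

lemma ac_mem_iff {A : Finset (ℕ × ℕ)} (hA : IsAntichain (· ≤ ·) (↑A : Set (ℕ × ℕ)))
    {x y : ℕ} :
    (x, y) ∈ A ↔ x ∈ A.image Prod.fst ∧ y ∈ A.image Prod.snd ∧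
      ((A.image Prod.fst).filter (· ≤ x)).card =
        ((A.image Prod.snd).filter (y ≤ ·)).card := by
  have fwd : ∀ x y : ℕ, (x, y) ∈ A →
      ((A.image Prod.fst).filter (· ≤ x)).card =
        ((A.image Prod.snd).filter (y ≤ ·)).card := by
    intro x y hxy
    rw [Finset.filter_image, Finset.filter_image]
    rw [Finset.card_image_of_injOn (fun q hq r hr h =>
      ac_fst_inj hA (Finset.filter_subset _ _ hq) (Finset.filter_subset _ _ hr) h)]
    rw [Finset.card_image_of_injOn (fun q hq r hr h =>
      ac_snd_inj hA (Finset.filter_subset _ _ hq) (Finset.filter_subset _ _ hr) h)]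
    rw [ac_filter_eq hA hxy]
  constructor
  · intro hxy
    exact ⟨Finset.mem_image_of_mem _ hxy, Finset.mem_image_of_mem _ hxy, fwd x y hxy⟩
  · rintro ⟨hx, hy, hcard⟩
    obtain ⟨q, hq, hq1⟩ := Finset.mem_image.1 hx
    have h2 := fwd q.1 q.2 (by simpa using hq)
    rw [hq1] at h2
    have : q.2 = y := by
      apply rank_injY (Finset.mem_image_of_mem _ hq) hy
      rw [← h2, hcard]
    have : q = (x, y) := by
      cases q; simp_all
    rwa [← this]

lemma ac_proj_inj {A B : Finset (ℕ × ℕ)} (hA : IsAntichain (· ≤ ·) (↑A : Set (ℕ × ℕ)))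
    (hB : IsAntichain (· ≤ ·) (↑B : Set (ℕ × ℕ)))
    (h1 : A.image Prod.fst = B.image Prod.fst) (h2 : A.image Prod.snd = B.image Prod.snd) :
    A = B := by
  ext ⟨x, y⟩
  rw [ac_mem_iff hA, ac_mem_iff hB, h1, h2]

lemma image_orderEmbOfFin (s : Finset ℕ) {k : ℕ} (h : s.card = k) :
    Finset.image (s.orderEmbOfFin h) Finset.univ = s := by
  ext a
  simp only [Finset.mem_image, Finset.mem_univ, true_and]
  constructor
  · rintro ⟨i, rfl⟩; exact s.orderEmbOfFin_mem h i
  · intro ha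
    have : a ∈ Set.range (s.orderEmbOfFin h) := by
      rw [Finset.range_orderEmbOfFin]; exact ha
    obtain ⟨i, hi⟩ := this
    exact ⟨i, hi⟩

lemma ac_exists (S T : Finset ℕ) (h : S.card = T.card) :
    ∃ A : Finset (ℕ × ℕ), IsAntichain (· ≤ ·) (↑A : Set (ℕ × ℕ)) ∧
      A.image Prod.fst = S ∧ A.image Prod.snd = T := by
  set k := S.card with hk
  have hT : T.card = k := h.symm
  set f : Fin k → ℕ × ℕ := fun i => (S.orderEmbOfFin rfl i, T.orderEmbOfFin hT i.rev) with hf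
  refine ⟨Finset.image f Finset.univ, ?_, ?_, ?_⟩
  · rintro a ha b hb hne hle
    simp only [Finset.coe_image, Set.mem_image, Finset.coe_univ, Set.mem_univ, true_and,
      Set.image_univ, Set.mem_range] at ha hb
    obtain ⟨i, rfl⟩ := ha
    obtain ⟨j, rfl⟩ := hb
    have hij : i ≠ j := fun hij => hne (by rw [hij])
    rcases hij.lt_or_gt with hlt | hlt
    · refine absurd hle.2 ?_
      have hrev : j.rev < i.rev := by rw [Fin.rev_lt_rev]; exact hlt
      have := (T.orderEmbOfFin hT).strictMono hrev
      simp only [hf]; omega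
    · exact absurd hle.1 (by
        have := (S.orderEmbOfFin rfl).strictMono hlt
        simp only [hf]; omega)
  · rw [Finset.image_image]
    exact image_orderEmbOfFin S rfl
  · rw [Finset.image_image]
    have : (Prod.snd ∘ f) = (fun i : Fin k => T.orderEmbOfFin hT i.rev) := rfl
    rw [this]
    have : Finset.image (fun i : Fin k => T.orderEmbOfFin hT i.rev) Finset.univ
        = Finset.image (T.orderEmbOfFin hT) (Finset.image Fin.rev Finset.univ) := by
      rw [Finset.image_image]; rfl
    rw [this, Finset.image_univ_of_surjective Fin.rev_surjective]
    exact image_orderEmbOfFin T hT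

lemma vand (a b : ℕ) : ∑ k ∈ range (a + 1), a.choose k * b.choose k = (a + b).choose a := by
  have ext1 : ∑ k ∈ range (a + 1), a.choose k * b.choose k
      = ∑ k ∈ range (a + b + 1), a.choose k * b.choose k := by
    apply Finset.sum_subset (by apply Finset.range_subset_range.2; omega)
    intro k _ hk
    simp only [Finset.mem_range] at hk
    rw [Nat.choose_eq_zero_of_lt (by omega)]
    ring
  have ext2 : ∑ k ∈ range (b + 1), a.choose k * b.choose k
      = ∑ k ∈ range (a + b + 1), a.choose k * b.choose k := by
    apply Finset.sum_subset (by apply Finset.range_subset_range.2; omega)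
    intro k _ hk
    simp only [Finset.mem_range] at hk
    rw [Nat.choose_eq_zero_of_lt (show b < k by omega)]
    ring
  have h1 : (a + b).choose b = ∑ k ∈ range (b + 1), a.choose k * b.choose (b - k) := by
    rw [Nat.add_choose_eq, Finset.Nat.sum_antidiagonal_eq_sum_range_succ_mk]
  have h2 : ∑ k ∈ range (b + 1), a.choose k * b.choose (b - k)
      = ∑ k ∈ range (b + 1), a.choose k * b.choose k := by
    apply Finset.sum_congr rfl
    intro k hk
    simp only [Finset.mem_range] at hk
    rw [Nat.choose_symm (by omega)]
  have h3 : (a + b).choose a = (a + b).choose b := by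
    rw [← Nat.choose_symm (show a ≤ a + b by omega)]
    congr 1
    omega
  rw [ext1, h3, h1, h2, ext2]

lemma card_ac_prod (X Y : Finset ℕ) :
    ((X ×ˢ Y).powerset.filter
      (fun A : Finset (ℕ × ℕ) => IsAntichain (· ≤ ·) (↑A : Set (ℕ × ℕ)))).card
      = (X.card + Y.card).choose X.card := by
  have key : ((X ×ˢ Y).powerset.filter
        (fun A : Finset (ℕ × ℕ) => IsAntichain (· ≤ ·) (↑A : Set (ℕ × ℕ)))).card
      = ((X.powerset ×ˢ Y.powerset).filter (fun p => p.1.card = p.2.card)).card := by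
    apply Finset.card_bij (fun A _ => (A.image Prod.fst, A.image Prod.snd))
    · intro A hA
      simp only [Finset.mem_filter, Finset.mem_powerset] at hA
      obtain ⟨hsub, hac⟩ := hA
      simp only [Finset.mem_filter, Finset.mem_product, Finset.mem_powerset]
      refine ⟨⟨?_, ?_⟩, ?_⟩
      · intro x hx
        obtain ⟨q, hq, rfl⟩ := Finset.mem_image.1 hx
        exact (Finset.mem_product.1 (hsub hq)).1
      · intro y hy
        obtain ⟨q, hq, rfl⟩ := Finset.mem_image.1 hy
        exact (Finset.mem_product.1 (hsub hq)).2
      · rw [card_image_fst hac, card_image_snd hac]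
    · intro A hA B hB hEq
      simp only [Finset.mem_filter, Finset.mem_powerset] at hA hB
      exact ac_proj_inj hA.2 hB.2 (congrArg Prod.fst hEq) (congrArg Prod.snd hEq)
    · rintro ⟨S, T⟩ hST
      simp only [Finset.mem_filter, Finset.mem_product, Finset.mem_powerset] at hST
      obtain ⟨⟨hS, hT⟩, hcard⟩ := hST
      obtain ⟨A, hac, h1, h2⟩ := ac_exists S T hcard
      refine ⟨A, ?_, by rw [h1, h2]⟩
      simp only [Finset.mem_filter, Finset.mem_powerset]
      refine ⟨?_, hac⟩
      intro q hq
      rw [Finset.mem_product]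
      constructor
      · exact hS (h1 ▸ Finset.mem_image_of_mem _ hq)
      · exact hT (h2 ▸ Finset.mem_image_of_mem _ hq)
  rw [key]
  have un : (X.powerset ×ˢ Y.powerset).filter (fun p => p.1.card = p.2.card)
      = (range (X.card + 1)).biUnion
          (fun k => X.powersetCard k ×ˢ Y.powersetCard k) := by
    ext ⟨S, T⟩
    simp only [Finset.mem_filter, Finset.mem_product, Finset.mem_powerset,
      Finset.mem_biUnion, Finset.mem_range, Finset.mem_powersetCard]
    constructor
    · rintro ⟨⟨hS, hT⟩, hc⟩
      exact ⟨S.card, by have := Finset.card_le_card hS; omega, ⟨hS, rfl⟩, ⟨hT, hc.symm⟩⟩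
    · rintro ⟨k, _, ⟨hS, rfl⟩, ⟨hT, hTc⟩⟩
      exact ⟨⟨hS, hT⟩, hTc.symm⟩
  rw [un, Finset.card_biUnion, ← vand X.card Y.card]
  · apply Finset.sum_congr rfl
    intro k _
    rw [Finset.card_product, Finset.card_powersetCard, Finset.card_powersetCard]
  · intro i _ j _ hij
    simp only [Finset.disjoint_left]
    rintro ⟨S, T⟩ hS hT
    simp only [Finset.mem_product, Finset.mem_powersetCard] at hS hT
    exact hij (by rw [← hS.1.2, hT.1.2])

lemma card_Bi (m n u v : ℕ) (hu1 : 1 ≤ u) (hum : u ≤ m) (hv1 : 1 ≤ v) (hvn : v ≤ n) :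
    ((Finset.Icc ((1:ℕ), (1:ℕ)) (m, n)).powerset.filter
      (fun A : Finset (ℕ × ℕ) => IsAntichain (· ≤ ·) (↑A : Set (ℕ × ℕ)) ∧ (u, v) ∈ A)).card
    = (n + u - v - 1).choose (u - 1) * (m - u + v - 1).choose (v - 1) := by
  have trich : ∀ A : Finset (ℕ × ℕ), IsAntichain (· ≤ ·) (↑A : Set (ℕ × ℕ)) → (u, v) ∈ A →
      ∀ q ∈ A, q = (u, v) ∨ (q.1 < u ∧ v < q.2) ∨ (u < q.1 ∧ q.2 < v) := by
    intro A hac hmem q hq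
    by_cases hqe : q = (u, v)
    · exact Or.inl hqe
    · have h1 : ¬ q ≤ (u, v) := hac hq hmem hqe
      have h2 : ¬ (u, v) ≤ q := hac hmem hq (Ne.symm hqe)
      obtain ⟨x, y⟩ := q
      simp only [Prod.le_def, Prod.ext_iff, not_and_or, not_le] at h1 h2 hqe ⊢
      omega
  set U : Finset (ℕ × ℕ) := Finset.Icc 1 (u - 1) ×ˢ Finset.Icc (v + 1) n with hU
  set L : Finset (ℕ × ℕ) := Finset.Icc (u + 1) m ×ˢ Finset.Icc 1 (v - 1) with hL
  set 𝒰 := U.powerset.filter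
    (fun A : Finset (ℕ × ℕ) => IsAntichain (· ≤ ·) (↑A : Set (ℕ × ℕ))) with h𝒰
  set ℒ := L.powerset.filter
    (fun A : Finset (ℕ × ℕ) => IsAntichain (· ≤ ·) (↑A : Set (ℕ × ℕ))) with hℒ
  have memU : ∀ q : ℕ × ℕ, q ∈ U ↔ 1 ≤ q.1 ∧ q.1 ≤ u - 1 ∧ v + 1 ≤ q.2 ∧ q.2 ≤ n := by
    intro q; simp [hU, Finset.mem_product, Finset.mem_Icc]; tauto
  have memL : ∀ q : ℕ × ℕ, q ∈ L ↔ u + 1 ≤ q.1 ∧ q.1 ≤ m ∧ 1 ≤ q.2 ∧ q.2 ≤ v - 1 := by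
    intro q; simp [hL, Finset.mem_product, Finset.mem_Icc]; tauto
  have memG : ∀ q : ℕ × ℕ, q ∈ Finset.Icc ((1:ℕ), (1:ℕ)) (m, n) ↔
      1 ≤ q.1 ∧ q.1 ≤ m ∧ 1 ≤ q.2 ∧ q.2 ≤ n := by
    intro q; simp [Finset.mem_Icc, Prod.le_def]; tauto
  have key : ((Finset.Icc ((1:ℕ), (1:ℕ)) (m, n)).powerset.filter
      (fun A : Finset (ℕ × ℕ) => IsAntichain (· ≤ ·) (↑A : Set (ℕ × ℕ)) ∧ (u, v) ∈ A)).card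
      = (𝒰 ×ˢ ℒ).card := by
    refine Finset.card_bij'
      (fun A _ => (A.filter (fun q => q.1 < u), A.filter (fun q => u < q.1)))
      (fun P _ => insert (u, v) (P.1 ∪ P.2)) ?hi ?hj ?li ?ri
    case hi =>
      intro A hA
      simp only [Finset.mem_filter, Finset.mem_powerset] at hA
      obtain ⟨hsub, hac, hmem⟩ := hA
      simp only [Finset.mem_product, Finset.mem_filter, Finset.mem_powerset, h𝒰, hℒ]
      refine ⟨⟨?_, ?_⟩, ?_, ?_⟩
      · intro q hq
        simp only [Finset.mem_filter] at hq
        obtain ⟨hqA, hqlt⟩ := hq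
        have hg := (memG q).1 (hsub hqA)
        rcases trich A hac hmem q hqA with rfl | ⟨h1, h2⟩ | ⟨h1, h2⟩
        · omega
        · exact (memU q).2 (by omega)
        · omega
      · exact IsAntichain.subset hac (by exact_mod_cast Finset.filter_subset _ _)
      · intro q hq
        simp only [Finset.mem_filter] at hq
        obtain ⟨hqA, hqlt⟩ := hq
        have hg := (memG q).1 (hsub hqA)
        rcases trich A hac hmem q hqA with rfl | ⟨h1, h2⟩ | ⟨h1, h2⟩
        · omega
        · omega
        · exact (memL q).2 (by omega)
      · exact IsAntichain.subset hac (by exact_mod_cast Finset.filter_subset _ _)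
    case hj =>
      rintro ⟨B, C⟩ hBC
      simp only [Finset.mem_product, Finset.mem_filter, Finset.mem_powerset, h𝒰, hℒ] at hBC
      obtain ⟨⟨hBsub, hBac⟩, hCsub, hCac⟩ := hBC
      have hBb : ∀ q ∈ B, 1 ≤ q.1 ∧ q.1 ≤ u - 1 ∧ v + 1 ≤ q.2 ∧ q.2 ≤ n :=
        fun q hq => (memU q).1 (hBsub hq)
      have hCb : ∀ q ∈ C, u + 1 ≤ q.1 ∧ q.1 ≤ m ∧ 1 ≤ q.2 ∧ q.2 ≤ v - 1 :=
        fun q hq => (memL q).1 (hCsub hq)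
      simp only [Finset.mem_filter, Finset.mem_powerset]
      refine ⟨?_, ?_, Finset.mem_insert_self _ _⟩
      · intro q hq
        rcases Finset.mem_insert.1 hq with rfl | hq
        · exact (memG _).2 (by omega)
        · rcases Finset.mem_union.1 hq with hq | hq
          · have := hBb q hq; exact (memG q).2 (by omega)
          · have := hCb q hq; exact (memG q).2 (by omega)
      · rintro a ha b hb hne hle
        simp only [Finset.coe_insert, Set.mem_insert_iff, Finset.coe_union, Set.mem_union,
          Finset.mem_coe] at ha hb
        rw [Prod.le_def] at hle
        rcases ha with rfl | ha | ha <;> rcases hb with rfl | hb | hb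
        · exact hne rfl
        · have := hBb b hb; omega
        · have := hCb b hb; omega
        · have := hBb a ha; omega
        · exact hBac (Finset.mem_coe.2 ha) (Finset.mem_coe.2 hb) hne (Prod.le_def.2 hle)
        · have := hBb a ha; have := hCb b hb; omega
        · have := hCb a ha; omega
        · have := hCb a ha; have := hBb b hb; omega
        · exact hCac (Finset.mem_coe.2 ha) (Finset.mem_coe.2 hb) hne (Prod.le_def.2 hle)
    case li =>
      intro A hA
      simp only [Finset.mem_filter, Finset.mem_powerset] at hA
      obtain ⟨hsub, hac, hmem⟩ := hA
      ext q
      simp only [Finset.mem_insert, Finset.mem_union, Finset.mem_filter]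
      constructor
      · rintro (rfl | ⟨hq, _⟩ | ⟨hq, _⟩) <;> first | exact hmem | exact hq
      · intro hq
        rcases trich A hac hmem q hq with rfl | ⟨h1, _⟩ | ⟨h1, _⟩
        · exact Or.inl rfl
        · exact Or.inr (Or.inl ⟨hq, h1⟩)
        · exact Or.inr (Or.inr ⟨hq, h1⟩)
    case ri =>
      rintro ⟨B, C⟩ hBC
      simp only [Finset.mem_product, Finset.mem_filter, Finset.mem_powerset, h𝒰, hℒ] at hBC
      obtain ⟨⟨hBsub, _⟩, hCsub, _⟩ := hBC
      have hBb : ∀ q ∈ B, q.1 < u := fun q hq => by have := (memU q).1 (hBsub hq); omega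
      have hCb : ∀ q ∈ C, u < q.1 := fun q hq => by have := (memL q).1 (hCsub hq); omega
      refine Prod.ext ?_ ?_
      · ext q
        simp only [Finset.mem_filter, Finset.mem_insert, Finset.mem_union]
        constructor
        · rintro ⟨rfl | hq | hq, hlt⟩
          · omega
          · exact hq
          · exact absurd hlt (by have := hCb q hq; omega)
        · intro hq
          exact ⟨Or.inr (Or.inl hq), hBb q hq⟩
      · ext q
        simp only [Finset.mem_filter, Finset.mem_insert, Finset.mem_union]
        constructor
        · rintro ⟨rfl | hq | hq, hlt⟩
          · omega
          · exact absurd hlt (by have := hBb q hq; omega)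
          · exact hq
        · intro hq
          exact ⟨Or.inr (Or.inr hq), hCb q hq⟩
  rw [key, Finset.card_product]
  rw [h𝒰, hℒ, hU, hL, card_ac_prod, card_ac_prod]
  simp only [Nat.card_Icc]
  have e1 : (u - 1 + 1 - 1) = u - 1 := by omega
  have e2 : (n + 1 - (v + 1)) = n - v := by omega
  have e3 : (m + 1 - (u + 1)) = m - u := by omega
  have e4 : (v - 1 + 1 - 1) = v - 1 := by omega
  rw [e1, e2, e3, e4]
  have c1 : (u - 1 + (n - v)).choose (u - 1) = (n + u - v - 1).choose (u - 1) := by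
    congr 1; omega
  have c2 : (m - u + (v - 1)).choose (m - u) = (m - u + v - 1).choose (v - 1) := by
    have h : m - u + v - 1 = m - u + (v - 1) := by omega
    rw [h, ← Nat.choose_symm (show v - 1 ≤ m - u + (v - 1) by omega)]
    congr 1
    omega
  rw [c1, c2]

/-- The number of antichains of the grid poset `[1,m] × [1,n]` intersecting a given up-right
path `π` (with vertices `p 1 = (1,1), …, p (m+n-1) = (m,n)`) exactly once equals
`∑_{i=1}^{m+n-1} C(n+u_i-v_i-1, u_i-1) · C(m-u_i+v_i-1, v_i-1)`. -/
theorem count_extreme_rays_path (m n : ℕ) (hm : 1 < m) (hn : 1 < n)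
    (p : ℕ → ℕ × ℕ) (h1 : p 1 = (1, 1)) (h2 : p (m + n - 1) = (m, n))
    (hstep : ∀ i, 1 ≤ i → i < m + n - 1 →
      p (i + 1) = p i + (1, 0) ∨ p (i + 1) = p i + (0, 1)) :
    Nat.card {A : Finset (ℕ × ℕ) //
        (↑A : Set (ℕ × ℕ)) ⊆ Set.Icc (1, 1) (m, n) ∧
        IsAntichain (· ≤ ·) (↑A : Set (ℕ × ℕ)) ∧
        ((↑A : Set (ℕ × ℕ)) ∩ {w | ∃ i, 1 ≤ i ∧ i ≤ m + n - 1 ∧ p i = w}).ncard = 1} =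
      ∑ i ∈ Finset.Icc 1 (m + n - 1),
        (n + (p i).1 - (p i).2 - 1).choose ((p i).1 - 1) *
          (m - (p i).1 + (p i).2 - 1).choose ((p i).2 - 1) := by
  classical
  -- path facts
  have hstep' : ∀ j, 1 ≤ j → j < m + n - 1 → p j ≤ p (j + 1) := by
    intro j hj1 hj2
    rcases hstep j hj1 hj2 with h | h <;> rw [h] <;>
      simp [Prod.le_def]
  have hmono : ∀ i j, 1 ≤ i → i ≤ j → j ≤ m + n - 1 → p i ≤ p j := by
    intro i j h1i hij hj
    have H := Nat.le_induction (m := i)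
      (P := fun j _ => j ≤ m + n - 1 → p i ≤ p j)
      (fun _ => le_rfl)
      (fun k hik IH hk => le_trans (IH (by omega)) (hstep' k (by omega) (by omega)))
      j hij
    exact H hj
  have hsum : ∀ i, 1 ≤ i → i ≤ m + n - 1 → (p i).1 + (p i).2 = i + 1 := by
    intro i h1i hi
    have H := Nat.le_induction (m := 1)
      (P := fun i _ => i ≤ m + n - 1 → (p i).1 + (p i).2 = i + 1)
      (fun _ => by rw [h1])
      (fun k h1k IH hk => by
        have hIH := IH (by omega)
        rcases hstep k h1k (by omega) with h | h <;> rw [h] <;>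
          simp [Prod.fst_add, Prod.snd_add] <;> omega)
      i h1i
    exact H hi
  have hbound : ∀ i, 1 ≤ i → i ≤ m + n - 1 →
      1 ≤ (p i).1 ∧ (p i).1 ≤ m ∧ 1 ≤ (p i).2 ∧ (p i).2 ≤ n := by
    intro i h1i hi
    have hlo : p 1 ≤ p i := hmono 1 i le_rfl h1i hi
    have hhi : p i ≤ p (m + n - 1) := hmono i (m + n - 1) h1i hi le_rfl
    rw [h1] at hlo
    rw [h2] at hhi
    rw [Prod.le_def] at hlo hhi
    exact ⟨hlo.1, hhi.1, hlo.2, hhi.2⟩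
  -- the ambient finset of antichains
  set 𝒜 : Finset (Finset (ℕ × ℕ)) :=
    (Finset.Icc ((1:ℕ), (1:ℕ)) (m, n)).powerset.filter
      (fun A : Finset (ℕ × ℕ) => IsAntichain (· ≤ ·) (↑A : Set (ℕ × ℕ)) ∧
        ((↑A : Set (ℕ × ℕ)) ∩ {w | ∃ i, 1 ≤ i ∧ i ≤ m + n - 1 ∧ p i = w}).ncard = 1)
    with h𝒜
  have hscard : Nat.card {A : Finset (ℕ × ℕ) //
        (↑A : Set (ℕ × ℕ)) ⊆ Set.Icc (1, 1) (m, n) ∧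
        IsAntichain (· ≤ ·) (↑A : Set (ℕ × ℕ)) ∧
        ((↑A : Set (ℕ × ℕ)) ∩ {w | ∃ i, 1 ≤ i ∧ i ≤ m + n - 1 ∧ p i = w}).ncard = 1}
      = 𝒜.card := by
    rw [Nat.card_congr (Equiv.subtypeEquivRight (q := fun A => A ∈ 𝒜) ?_),
      Nat.card_eq_finsetCard]
    intro A
    simp only [h𝒜, Finset.mem_filter, Finset.mem_powerset, ← Finset.coe_subset, Finset.coe_Icc]
  -- characterization of the intersection condition
  have hchar : ∀ A : Finset (ℕ × ℕ), IsAntichain (· ≤ ·) (↑A : Set (ℕ × ℕ)) →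
      (((↑A : Set (ℕ × ℕ)) ∩ {w | ∃ i, 1 ≤ i ∧ i ≤ m + n - 1 ∧ p i = w}).ncard = 1 ↔
        ∃ i, 1 ≤ i ∧ i ≤ m + n - 1 ∧ p i ∈ A) := by
    intro A hac
    constructor
    · intro h
      obtain ⟨w, hw⟩ := Set.ncard_eq_one.1 h
      have hwmem : w ∈ ((↑A : Set (ℕ × ℕ)) ∩ {w | ∃ i, 1 ≤ i ∧ i ≤ m + n - 1 ∧ p i = w}) := by
        rw [hw]; exact Set.mem_singleton w
      obtain ⟨hwA, i, h1i, hiN, rfl⟩ := hwmem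
      exact ⟨i, h1i, hiN, hwA⟩
    · rintro ⟨i, h1i, hiN, hmem⟩
      rw [Set.ncard_eq_one]
      refine ⟨p i, ?_⟩
      ext w
      simp only [Set.mem_inter_iff, Set.mem_setOf_eq, Set.mem_singleton_iff, Finset.mem_coe]
      constructor
      · rintro ⟨hwA, j, h1j, hjN, rfl⟩
        by_contra hne
        rcases le_total j i with hji | hij
        · exact hac (Finset.mem_coe.2 hwA) (Finset.mem_coe.2 hmem) hne
            (hmono j i h1j hji hiN)
        · exact hac (Finset.mem_coe.2 hmem) (Finset.mem_coe.2 hwA) (Ne.symm hne)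
            (hmono i j h1i hij hjN)
      · rintro rfl
        exact ⟨hmem, i, h1i, hiN, rfl⟩
  -- decomposition as a disjoint union
  set B : ℕ → Finset (Finset (ℕ × ℕ)) := fun i =>
    (Finset.Icc ((1:ℕ), (1:ℕ)) (m, n)).powerset.filter
      (fun A : Finset (ℕ × ℕ) => IsAntichain (· ≤ ·) (↑A : Set (ℕ × ℕ)) ∧ p i ∈ A)
    with hB
  have hunion : 𝒜 = (Finset.Icc 1 (m + n - 1)).biUnion B := by
    ext A
    simp only [h𝒜, hB, Finset.mem_filter, Finset.mem_powerset, Finset.mem_biUnion,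
      Finset.mem_Icc]
    constructor
    · rintro ⟨hsub, hac, hnc⟩
      obtain ⟨i, h1i, hiN, hmem⟩ := (hchar A hac).1 hnc
      exact ⟨i, ⟨h1i, hiN⟩, hsub, hac, hmem⟩
    · rintro ⟨i, ⟨h1i, hiN⟩, hsub, hac, hmem⟩
      exact ⟨hsub, hac, (hchar A hac).2 ⟨i, h1i, hiN, hmem⟩⟩
  have hdisj : ∀ i ∈ Finset.Icc 1 (m + n - 1), ∀ j ∈ Finset.Icc 1 (m + n - 1),
      i ≠ j → Disjoint (B i) (B j) := by
    intro i hi j hj hij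
    simp only [Finset.mem_Icc] at hi hj
    rw [Finset.disjoint_left]
    intro A hAi hAj
    simp only [hB, Finset.mem_filter, Finset.mem_powerset] at hAi hAj
    obtain ⟨_, hac, hmi⟩ := hAi
    obtain ⟨_, _, hmj⟩ := hAj
    have hne : p i ≠ p j := by
      intro h
      have si := hsum i hi.1 hi.2
      have sj := hsum j hj.1 hj.2
      rw [h] at si
      omega
    rcases le_total i j with hle | hle
    · exact hac (Finset.mem_coe.2 hmi) (Finset.mem_coe.2 hmj) hne
        (hmono i j hi.1 hle hj.2)
    · exact hac (Finset.mem_coe.2 hmj) (Finset.mem_coe.2 hmi) (Ne.symm hne)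
        (hmono j i hj.1 hle hi.2)
  rw [hscard, hunion, Finset.card_biUnion hdisj]
  apply Finset.sum_congr rfl
  intro i hi
  simp only [Finset.mem_Icc] at hi
  obtain ⟨hu1, hum, hv1, hvn⟩ := hbound i hi.1 hi.2
  have := card_Bi m n (p i).1 (p i).2 hu1 hum hv1 hvn
  rw [hB]
  convert this using 3
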